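/- In the free category on a directed graph G modulo the congruence generated by a set R of relations (pairs of parallel paths of length ≤ 2 through distinct intermediate vertices), if W ⊆ V is path-closed (every directed path between vertices of W lies entirely in W) and relation-closed (every relating 2-cell with source and target in W lies in W), then the induced functor from the quotient of the free category on the full subgraph G|_W to the quotient of the free category on G is fully faithful. -/

import Mathlib

open CategoryTheory

universe u

/-- The set of vertices visited by a path in a quiver. -/
def pathVerts {V : Type u} [Quiver.{u + 1} V] :
    ∀ {a b : V}, Quiver.Path a b → Set V
  | a, _, Quiver.Path.nil => {a}
  | _, b, Quiver.Path.cons p _ => pathVerts p ∪ {b}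

/-- The full subquiver of a quiver on a set `W` of vertices. -/
instance fullSubquiver {V : Type u} [Quiver.{u + 1} V] (W : Set V) : Quiver ↥W :=
  ⟨fun a b => (a : V) ⟶ (b : V)⟩

/-- The inclusion prefunctor of a full subquiver. -/
def fullSubquiverIncl {V : Type u} [Quiver.{u + 1} V] (W : Set V) :
    ↥W ⥤q V :=
  { obj := Subtype.val, map := fun f => f }

/-- The induced functor on free (path) categories. -/
def pathsIncl {V : Type u} [Quiver.{u + 1} V] (W : Set V) :
    Paths ↥W ⥤ Paths V :=
  Paths.lift ((fullSubquiverIncl W).comp (Paths.of V))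

/-- The pullback of a relation on the path category of `V` to the path
category of the full subquiver on `W`. -/
def restrictedRel {V : Type u} [Quiver.{u + 1} V] (W : Set V)
    (R : HomRel (Paths V)) :
    HomRel (Paths ↥W) :=
  fun _ _ f g => R ((pathsIncl W).map f) ((pathsIncl W).map g)

section Aux

variable {V : Type u} [Quiver.{u + 1} V] (W : Set V)

@[simp] theorem pathVerts_nil {a : V} :
    pathVerts (Quiver.Path.nil : Quiver.Path a a) = {a} := by rw [pathVerts]

@[simp] theorem pathVerts_cons {a b c : V} (p : Quiver.Path a b) (e : b ⟶ c) :
    pathVerts (p.cons e) = pathVerts p ∪ {c} := by rw [pathVerts]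

theorem pathVerts_start : ∀ {a b : V} (p : Quiver.Path a b), a ∈ pathVerts p
  | _, _, Quiver.Path.nil => by simp
  | _, _, Quiver.Path.cons p _ => by
    rw [pathVerts_cons]
    exact Set.mem_union_left _ (pathVerts_start p)

theorem pathVerts_end : ∀ {a b : V} (p : Quiver.Path a b), b ∈ pathVerts p
  | _, _, Quiver.Path.nil => by simp
  | _, _, Quiver.Path.cons _ _ => by
    rw [pathVerts_cons]
    exact Set.mem_union_right _ rfl

theorem subset_pathVerts_cons {a b c : V} (p : Quiver.Path a b) (e : b ⟶ c) :
    pathVerts p ⊆ pathVerts (p.cons e) := by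
  rw [pathVerts_cons]
  exact Set.subset_union_left

theorem pathVerts_comp_left : ∀ {a b c : V} (p : Quiver.Path a b) (q : Quiver.Path b c),
    pathVerts p ⊆ pathVerts (p.comp q)
  | _, _, _, _, Quiver.Path.nil => le_refl _
  | _, _, _, p, Quiver.Path.cons q e => by
    rw [Quiver.Path.comp_cons]
    exact (pathVerts_comp_left p q).trans (subset_pathVerts_cons _ e)

theorem pathVerts_comp_right : ∀ {a b c : V} (p : Quiver.Path a b) (q : Quiver.Path b c),
    pathVerts q ⊆ pathVerts (p.comp q)
  | _, _, _, p, Quiver.Path.nil => by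
    intro x hx
    rw [pathVerts_nil] at hx
    cases hx
    exact pathVerts_end p
  | _, _, _, p, Quiver.Path.cons q e => by
    rw [Quiver.Path.comp_cons, pathVerts_cons, pathVerts_cons]
    exact Set.union_subset_union_left _ (pathVerts_comp_right p q)

/-- Lift a path through `W` to a path in the full subquiver on `W`. -/
def liftPath : ∀ {a b : V} (ha : a ∈ W) (hb : b ∈ W) (p : Quiver.Path a b),
    pathVerts p ⊆ W → Quiver.Path (⟨a, ha⟩ : ↥W) (⟨b, hb⟩ : ↥W)
  | _, _, _, _, Quiver.Path.nil, _ => Quiver.Path.nil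
  | _, _, ha, _, Quiver.Path.cons p e, h =>
    Quiver.Path.cons
      (liftPath ha (h (subset_pathVerts_cons p e (pathVerts_end p)))
        p (fun _ hx => h (subset_pathVerts_cons p e hx))) e

theorem liftPath_congr {a b : V} (ha : a ∈ W) (hb : b ∈ W) {p q : Quiver.Path a b}
    (h : p = q) (hp : pathVerts p ⊆ W) (hq : pathVerts q ⊆ W) :
    liftPath W ha hb p hp = liftPath W ha hb q hq := by
  subst h
  rfl

theorem pathsIncl_map_nil (a : ↥W) :
    (pathsIncl W).map (X := a) (Y := a) Quiver.Path.nil = Quiver.Path.nil := rfl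

theorem pathsIncl_map_cons {a b c : ↥W} (p : Quiver.Path a b) (e : b ⟶ c) :
    (pathsIncl W).map (X := a) (Y := c) (p.cons e) =
      Quiver.Path.cons ((pathsIncl W).map (X := a) (Y := b) p) e := rfl

theorem pathsIncl_liftPath : ∀ {a b : V} (ha : a ∈ W) (hb : b ∈ W) (p : Quiver.Path a b)
    (h : pathVerts p ⊆ W),
    (pathsIncl W).map (X := ⟨a, ha⟩) (Y := ⟨b, hb⟩) (liftPath W ha hb p h) = p
  | _, _, _, _, Quiver.Path.nil, _ => by
    simp only [liftPath]
    rfl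
  | _, _, ha, hb, Quiver.Path.cons p e, h => by
    simp only [liftPath]
    rw [pathsIncl_map_cons]
    exact congrArg (Quiver.Path.cons · e) (pathsIncl_liftPath ha _ p _)

theorem liftPath_comp : ∀ {a b c : V} (ha : a ∈ W) (hb : b ∈ W) (hc : c ∈ W)
    (p : Quiver.Path a b) (q : Quiver.Path b c)
    (hp : pathVerts p ⊆ W) (hq : pathVerts q ⊆ W)
    (hpq : pathVerts (p.comp q) ⊆ W),
    liftPath W ha hc (p.comp q) hpq = (liftPath W ha hb p hp).comp (liftPath W hb hc q hq)
  | _, _, _, ha, hb, hc, p, Quiver.Path.nil, hp, hq, hpq => by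
    have h1 : liftPath W hb hc Quiver.Path.nil hq = Quiver.Path.nil := by
      simp only [liftPath]
    rw [h1]
    conv_rhs => rw [Quiver.Path.comp_nil]
    exact liftPath_congr W ha hc (Quiver.Path.comp_nil p) hpq hp
  | _, _, _, ha, hb, hc, p, Quiver.Path.cons q e, hp, hq, hpq => by
    have h2 := liftPath_congr W ha hc (Quiver.Path.comp_cons p q e) hpq
      (by rw [← Quiver.Path.comp_cons]; exact hpq)
    rw [h2]
    simp only [liftPath]
    conv_rhs => rw [Quiver.Path.comp_cons]
    have h3 := liftPath_comp ha hb (hq (subset_pathVerts_cons q e (pathVerts_end q))) p q hp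
      (fun _ hx => hq (subset_pathVerts_cons q e hx))
      (fun _ hx => hpq (subset_pathVerts_cons (p.comp q) e hx))
    have hbq := hq (subset_pathVerts_cons q e (pathVerts_end q))
    exact congrArg (fun r : Quiver.Path (⟨_, ha⟩ : ↥W) ⟨_, hbq⟩ =>
      Quiver.Path.cons r (show (⟨_, hbq⟩ : ↥W) ⟶ ⟨_, hc⟩ from e)) h3

theorem liftPath_pathsIncl : ∀ {a b : V} (ha : a ∈ W) (hb : b ∈ W)
    (p : Quiver.Path (⟨a, ha⟩ : ↥W) (⟨b, hb⟩ : ↥W))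
    (h : pathVerts ((pathsIncl W).map (X := ⟨a, ha⟩) (Y := ⟨b, hb⟩) p) ⊆ W),
    liftPath W ha hb ((pathsIncl W).map (X := ⟨a, ha⟩) (Y := ⟨b, hb⟩) p) h = p
  | _, _, ha, hb, Quiver.Path.nil, h => by
    rw [liftPath_congr W ha hb (pathsIncl_map_nil W ⟨_, ha⟩) h
      (by exact h)]
    exact liftPath.eq_1 W _ ha hb _
  | _, _, ha, hb, Quiver.Path.cons (b := c) p e, h => by
    have h2 := liftPath_congr W ha hb
      (pathsIncl_map_cons W (a := ⟨_, ha⟩) (c := ⟨_, hb⟩) p e) h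
      (by rw [← pathsIncl_map_cons]; exact h)
    rw [h2]
    simp only [liftPath]
    exact (liftPath.eq_2 W _ _ ha hb _ ((pathsIncl W).map p) e _).trans
      (congrArg (fun r : Quiver.Path (⟨_, ha⟩ : ↥W) c => Quiver.Path.cons r e)
        (liftPath_pathsIncl ha c.2 p _))

open CategoryTheory.Quotient in
theorem eqvGen_lift (R : HomRel (Paths V))
    (hpathClosed : ∀ (a b : V), a ∈ W → b ∈ W →
      ∀ p : Quiver.Path a b, pathVerts p ⊆ W)
    {a b : Paths V} (ha : (a : V) ∈ W) (hb : (b : V) ∈ W) {f g : a ⟶ b}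
    (h : Relation.EqvGen (@HomRel.CompClosure (Paths V) _ R a b) f g) :
    Relation.EqvGen (@HomRel.CompClosure (Paths ↥W) _ (restrictedRel W R) ⟨a, ha⟩ ⟨b, hb⟩)
      (liftPath W ha hb f (hpathClosed a b ha hb f))
      (liftPath W ha hb g (hpathClosed a b ha hb g)) := by
  induction h with
  | rel f g hr =>
    obtain @⟨_, _, x, y, p, m₁, m₂, q, hR⟩ := hr
    apply Relation.EqvGen.rel
    have hx : (x : V) ∈ W :=
      hpathClosed a b ha hb _ (pathVerts_comp_left p (m₁ ≫ q) (pathVerts_end p))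
    have hy : (y : V) ∈ W :=
      hpathClosed a b ha hb _
        ((pathVerts_comp_right p (m₁ ≫ q)) (pathVerts_comp_left m₁ q (pathVerts_end m₁)))
    have e₁ : ∀ (m : x ⟶ y) (hm : pathVerts (p ≫ m ≫ q) ⊆ W),
        liftPath W ha hb (p ≫ m ≫ q) hm =
          Quiver.Path.comp
            (liftPath W ha hx p (fun z hz => hm (pathVerts_comp_left p _ hz)))
          (Quiver.Path.comp
            (liftPath W hx hy m
              (fun z hz => hm ((pathVerts_comp_right p _) (pathVerts_comp_left m q hz))))
            (liftPath W hy hb q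
              (fun z hz => hm ((pathVerts_comp_right p _) (pathVerts_comp_right m q hz))))) := by
      intro m hm
      exact (liftPath_comp W ha hx hb p (Quiver.Path.comp m q) _
        (fun z hz => hm ((pathVerts_comp_right p _) hz)) hm).trans
        (congrArg (Quiver.Path.comp _) (liftPath_comp W hx hy hb m q _ _ _))
    rw [e₁ m₁, e₁ m₂]
    exact HomRel.CompClosure.intro _ _ _ _ _ _ (by
      show R ((pathsIncl W).map _) ((pathsIncl W).map _)
      exact (congrArg₂ (fun u v => R u v) (pathsIncl_liftPath W hx hy m₁ _)
        (pathsIncl_liftPath W hx hy m₂ _)).mpr hR)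
  | refl f => exact Relation.EqvGen.refl _
  | symm f g _ ih => exact Relation.EqvGen.symm _ _ ih
  | trans f g k _ _ ih₁ ih₂ => exact Relation.EqvGen.trans _ _ _ ih₁ ih₂

end Aux

/-- Quotient of the free category on the full subgraph on a path-closed,
relation-closed set `W` of vertices maps fully faithfully to the quotient of
the free category on the whole graph. -/
theorem full_subgraph_quotient_fullyFaithful {V : Type u} [Quiver.{u + 1} V]
    (R : HomRel (Paths V)) (W : Set V)
    (hpathClosed : ∀ (a b : V), a ∈ W → b ∈ W →
      ∀ p : Quiver.Path a b, pathVerts p ⊆ W)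
    (hrelClosed : ∀ (x y : Paths V) (f g : x ⟶ y), R f g →
      (x : V) ∈ W → (y : V) ∈ W → pathVerts f ⊆ W ∧ pathVerts g ⊆ W) :
    (CategoryTheory.Quotient.lift (restrictedRel W R)
        ((pathsIncl W) ⋙ CategoryTheory.Quotient.functor R)
        (fun _ _ f g h => CategoryTheory.Quotient.sound R h)).Full ∧
    (CategoryTheory.Quotient.lift (restrictedRel W R)
        ((pathsIncl W) ⋙ CategoryTheory.Quotient.functor R)
        (fun _ _ f g h => CategoryTheory.Quotient.sound R h)).Faithful := by
  constructor
  · constructor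
    intro X Y f
    obtain ⟨x⟩ := X
    obtain ⟨y⟩ := Y
    obtain ⟨p⟩ := f
    refine ⟨Quot.mk _ (liftPath W x.2 y.2 p (hpathClosed _ _ x.2 y.2 p)), ?_⟩
    show Quot.mk _ ((pathsIncl W).map _) = Quot.mk _ p
    exact congrArg (Quot.mk _) (pathsIncl_liftPath W x.2 y.2 p _)
  · constructor
    intro X Y f g h
    obtain ⟨x⟩ := X
    obtain ⟨y⟩ := Y
    obtain ⟨p⟩ := f
    obtain ⟨q⟩ := g
    have h' : Relation.EqvGen (@HomRel.CompClosure (Paths V) _ R x.1 y.1)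
        ((pathsIncl W).map (X := x) (Y := y) p) ((pathsIncl W).map (X := x) (Y := y) q) :=
      Quot.eq.1 h
    have h2 := eqvGen_lift W R hpathClosed x.2 y.2 h'
    have e1 := liftPath_pathsIncl W x.2 y.2 p (hpathClosed _ _ x.2 y.2 _)
    have e2 := liftPath_pathsIncl W x.2 y.2 q (hpathClosed _ _ x.2 y.2 _)
    exact Quot.eqvGen_sound (e1 ▸ e2 ▸ h2)
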